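/- Let C: f=0 be a nodal curve of degree N in P^2 with two irreducible components f = f_1·f_2. Then the 2-form γ = −df_1 ∧ df_2 satisfies df ∧ γ = 0 and represents a nonzero class in H^2(K^*(f))_N. -/

import Mathlib

open MvPolynomial

noncomputable section

/-- The polynomial ring `ℂ[x_0,…,x_n]`. -/
abbrev MvP (n : ℕ) := MvPolynomial (Fin (n + 1)) ℂ

/-- The Jacobian ideal of `f`, spanned by its partial derivatives. -/
def jacobianIdeal {n : ℕ} (f : MvP n) : Ideal (MvP n) :=
  Ideal.span (Set.range fun i => pderiv i f)

/-- The dimension of the degree `k` graded piece of `S/I`. -/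
def gradedPieceDim {n : ℕ} (I : Ideal (MvP n)) (k : ℕ) : ℕ :=
  Module.finrank ℂ
    (↥(homogeneousSubmodule (Fin (n + 1)) ℂ k) ⧸
      (Submodule.comap (homogeneousSubmodule (Fin (n + 1)) ℂ k).subtype
        (Submodule.restrictScalars ℂ I)))

/-- `dim M(f)_k`, the dimension of the degree `k` piece of the Milnor algebra `S/J_f`. -/
def milnorDim {n : ℕ} (f : MvP n) (k : ℕ) : ℕ :=
  gradedPieceDim (jacobianIdeal f) k

/-- The Hilbert–Poincaré series of `S/I` as a power series over `ℤ`. -/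
def hilbertSeries {n : ℕ} (I : Ideal (MvP n)) : PowerSeries ℤ :=
  PowerSeries.mk fun k => (gradedPieceDim I k : ℤ)

/-- The projective hypersurface `f = 0` is smooth: the partial derivatives have no
common zero besides the origin. -/
def IsSmoothHypersurface {n : ℕ} (f : MvP n) : Prop :=
  ∀ x : Fin (n + 1) → ℂ, (∀ i, eval x (pderiv i f) = 0) → x = 0

/-- The Hessian matrix of `f` evaluated at `p`. -/
def hessianAt {n : ℕ} (f : MvP n) (p : Fin (n + 1) → ℂ) :
    Matrix (Fin (n + 1)) (Fin (n + 1)) ℂ :=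
  Matrix.of fun i j => eval p (pderiv i (pderiv j f))

/-- All singular points of the projective hypersurface `f = 0` are nodes
(ordinary double points): at any singular point the Hessian has the maximal
possible rank `n` for a singular point of a cone. -/
def IsNodal {n : ℕ} (f : MvP n) : Prop :=
  ∀ p : Fin (n + 1) → ℂ, p ≠ 0 → (∀ i, eval p (pderiv i f) = 0) →
    (hessianAt f p).rank = n

/-- `𝒩` is a set of affine representatives (one for each projective point) of the
singular locus of the projective hypersurface `f = 0`. -/
def RepresentsSingLocus {n : ℕ} (f : MvP n) (𝒩 : Finset (Fin (n + 1) → ℂ)) : Prop :=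
  (∀ p ∈ 𝒩, p ≠ 0 ∧ ∀ i, eval p (pderiv i f) = 0) ∧
  (∀ p : Fin (n + 1) → ℂ, p ≠ 0 → (∀ i, eval p (pderiv i f) = 0) →
      ∃ q ∈ 𝒩, ∃ c : ℂ, c ≠ 0 ∧ p = c • q) ∧
  (∀ p ∈ 𝒩, ∀ q ∈ 𝒩, (∃ c : ℂ, c ≠ 0 ∧ p = c • q) → p = q)

/-- The `ℂ`-linear map `(a_0,…,a_n) ↦ Σ a_i ∂f/∂x_i`. -/
def jacobianPairing {n : ℕ} (f : MvP n) : (Fin (n + 1) → MvP n) →ₗ[ℂ] MvP n :=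
  ∑ i : Fin (n + 1),
    (LinearMap.mulRight ℂ (pderiv i f)).comp
      (LinearMap.proj (R := ℂ) (φ := fun _ : Fin (n + 1) => MvP n) i)

/-- The space of syzygies `Σ a_i ∂f/∂x_i = 0` with all `a_i` homogeneous of degree `m`.
Via `ω = Σ ± a_i dx_0 ∧ … ∧ \hat{dx_i} ∧ … ∧ dx_n` this is the degree `m + n` part of
the kernel of `Ω^n → Ω^{n+1}` in the Koszul complex `K^*(f)`. -/
def syzygySubmodule {n : ℕ} (f : MvP n) (m : ℕ) :
    Submodule ℂ (Fin (n + 1) → MvP n) :=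
  (⨅ i : Fin (n + 1),
      Submodule.comap (LinearMap.proj (R := ℂ) (φ := fun _ : Fin (n + 1) => MvP n) i)
        (homogeneousSubmodule (Fin (n + 1)) ℂ m)) ⊓
    LinearMap.ker (jacobianPairing f)

/-- The elementary (Koszul/trivial) syzygy `h·(…, f_j, …, -f_i, …)` attached to indices
`i, j` and a coefficient `h`. -/
def elementarySyzygy {n : ℕ} (f : MvP n) (i j : Fin (n + 1)) (h : MvP n) :
    Fin (n + 1) → MvP n :=
  fun k => (if k = i then h * pderiv j f else 0) - (if k = j then h * pderiv i f else 0)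

/-- The trivial (Koszul) syzygies of degree `m` among the partial derivatives of `f`,
where `f` is homogeneous of degree `N`; they are spanned by the elementary syzygies
with homogeneous coefficients `h` of degree `m - (N - 1)`.  This is the degree `m + n`
part of the image of `Ω^{n-1} → Ω^n` in the Koszul complex `K^*(f)`. -/
def trivialSyzygies {n : ℕ} (f : MvP n) (N m : ℕ) :
    Submodule ℂ (Fin (n + 1) → MvP n) :=
  Submodule.span ℂ
    {a | ∃ i j : Fin (n + 1), ∃ d : ℕ, ∃ h : MvP n,
      m = d + (N - 1) ∧ h ∈ homogeneousSubmodule (Fin (n + 1)) ℂ d ∧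
      a = elementarySyzygy f i j h}

/-- `dim H^n(K^*(f))_{m+n}`: the dimension of the space of syzygies of degree `m`
among the partial derivatives of `f` (of degree `N`), modulo the trivial ones. -/
def koszulSyzygyDim {n : ℕ} (f : MvP n) (N m : ℕ) : ℕ :=
  Module.finrank ℂ
    (↥(syzygySubmodule f m) ⧸
      Submodule.comap (syzygySubmodule f m).subtype (trivialSyzygies f N m))

/-- `mdr(D)`: the minimal degree of a nontrivial syzygy among the partial derivatives,
i.e. `min {q | H^n(K^*(f))_{q+n} ≠ 0}`. -/
def mdr {n : ℕ} (f : MvP n) (N : ℕ) : ℕ :=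
  sInf {m | ¬ syzygySubmodule f m ≤ trivialSyzygies f N m}

/-- `ct(D)`: the coincidence threshold
`max {q | dim M(f)_k = dim M(f_s)_k for all k ≤ q}`. -/
def coincidenceThreshold {n : ℕ} (f fs : MvP n) : ℕ :=
  sSup {q | ∀ k ≤ q, milnorDim f k = milnorDim fs k}

/-- `st(D)`: the stability threshold, the minimal `q` from which on the dimensions
`dim M(f)_k` are constant (for a hypersurface with isolated singularities this
constant value is the total Tjurina number `τ(D)`). -/
def stabilityThreshold {n : ℕ} (f : MvP n) : ℕ :=
  sInf {q | ∀ k, q ≤ k → milnorDim f k = milnorDim f q}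

/-- The degree `k` homogeneous polynomials vanishing at all points of `𝒩`. -/
def vanishingSubmodule {n : ℕ} (𝒩 : Finset (Fin (n + 1) → ℂ)) (k : ℕ) :
    Submodule ℂ (MvP n) :=
  homogeneousSubmodule (Fin (n + 1)) ℂ k ⊓
    ⨅ p ∈ 𝒩, LinearMap.ker ((aeval p : MvP n →ₐ[ℂ] ℂ).toLinearMap)

/-- The defect (superabundance) `defect S_k(𝒩) = |𝒩| - codim {h ∈ S_k | h|_𝒩 = 0}`. -/
def defect {n : ℕ} (k : ℕ) (𝒩 : Finset (Fin (n + 1) → ℂ)) : ℕ :=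
  𝒩.card -
    (Module.finrank ℂ ↥(homogeneousSubmodule (Fin (n + 1)) ℂ k) -
      Module.finrank ℂ ↥(vanishingSubmodule 𝒩 k))

/-- The vector of coefficients of the 2-form `dg ∧ dh` in the basis
`dy∧dz, dz∧dx, dx∧dy` (so that `df ∧ (a dy∧dz + b dz∧dx + c dx∧dy) =
(a f_x + b f_y + c f_z) dx∧dy∧dz`). -/
def cross3 (g h : MvPolynomial (Fin 3) ℂ) : Fin 3 → MvPolynomial (Fin 3) ℂ :=
  ![pderiv 1 g * pderiv 2 h - pderiv 2 g * pderiv 1 h,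
    pderiv 2 g * pderiv 0 h - pderiv 0 g * pderiv 2 h,
    pderiv 0 g * pderiv 1 h - pderiv 1 g * pderiv 0 h]

section AuxLemmas

variable {σ : Type*} [Fintype σ] [DecidableEq σ] {R : Type*} [CommRing R]

lemma aux_degree_eq_sum_univ (d : σ →₀ ℕ) : d.degree = ∑ i : σ, d i :=
  Finset.sum_subset (Finset.subset_univ _)
    (fun x _ hx => Finsupp.notMem_support_iff.mp hx)

lemma aux_euler_monomial (d : σ →₀ ℕ) (c : R) :
    ∑ i : σ, X i * pderiv i (monomial d c) = d.degree • monomial d c := by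
  have h : ∀ i : σ, X i * pderiv i (monomial d c) = d i • monomial d c := by
    intro i
    rw [pderiv_monomial]
    rcases Nat.eq_zero_or_pos (d i) with h0 | hpos
    · simp [h0]
    · rw [X, monomial_mul, one_mul]
      have hd : Finsupp.single i 1 + (d - Finsupp.single i 1) = d := by
        rw [add_comm]
        exact tsub_add_cancel_of_le (by rw [Finsupp.single_le_iff]; exact hpos)
      rw [hd, smul_monomial, nsmul_eq_mul, mul_comm]
  rw [Finset.sum_congr rfl (fun i _ => h i), ← Finset.sum_smul, ← aux_degree_eq_sum_univ]

/-- Euler's identity for homogeneous polynomials. -/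
lemma aux_euler {f : MvPolynomial σ R} {n : ℕ} (hf : f.IsHomogeneous n) :
    ∑ i : σ, X i * pderiv i f = n • f := by
  conv_lhs => rw [f.as_sum]
  conv_rhs => rw [f.as_sum]
  rw [Finset.smul_sum]
  have key : ∀ i : σ, X i * pderiv i (∑ v ∈ f.support, monomial v (coeff v f))
      = ∑ v ∈ f.support, X i * pderiv i (monomial v (coeff v f)) := by
    intro i
    rw [map_sum, Finset.mul_sum]
  rw [Finset.sum_congr rfl fun i _ => key i, Finset.sum_comm]
  refine Finset.sum_congr rfl fun v hv => ?_
  have hn := hf (mem_support_iff.mp hv)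
  rw [Pi.one_def, ← Finsupp.degree_eq_weight_one] at hn
  rw [aux_euler_monomial, hn]

/-- Partial derivatives of a homogeneous polynomial are homogeneous of one less degree. -/
lemma aux_pderiv_isHom {f : MvPolynomial σ R} {n : ℕ} (hf : f.IsHomogeneous n) (i : σ) :
    (pderiv i f).IsHomogeneous (n - 1) := by
  conv in pderiv i f => rw [f.as_sum]
  rw [map_sum]
  apply IsHomogeneous.sum
  intro v hv
  rw [pderiv_monomial]
  rcases Nat.eq_zero_or_pos (v i) with h0 | hpos
  · simp [h0]; exact isHomogeneous_zero _ _ _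
  · apply isHomogeneous_monomial
    have hd : Finsupp.single i 1 + (v - Finsupp.single i 1) = v := by
      rw [add_comm]
      exact tsub_add_cancel_of_le (by rw [Finsupp.single_le_iff]; exact hpos)
    have h3 : v.degree = 1 + (v - Finsupp.single i 1).degree := by
      rw [← hd]
      simp [aux_degree_eq_sum_univ, Finsupp.add_apply, Finset.sum_add_distrib,
        Finsupp.single_apply]
    have hn := hf (mem_support_iff.mp hv)
    rw [Pi.one_def, ← Finsupp.degree_eq_weight_one] at hn
    omega

/-- A nonzero homogeneous polynomial of degree 0 over a field is a unit. -/
lemma aux_isUnit_of_hom_zero {K : Type*} [Field K] {f : MvPolynomial σ K}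
    (hf : f.IsHomogeneous 0) (hne : f ≠ 0) : IsUnit f := by
  have hC : f = C (coeff 0 f) := by
    ext m
    rcases eq_or_ne m 0 with rfl | hm
    · simp
    · rw [coeff_C, if_neg (Ne.symm hm)]
      by_contra hc
      have := hf hc
      rw [Pi.one_def, ← Finsupp.degree_eq_weight_one, Finsupp.degree_eq_zero_iff] at this
      exact hm this
  obtain ⟨c, hfc⟩ : ∃ c, f = C c := ⟨coeff 0 f, hC⟩
  have hc : c ≠ 0 := by
    intro h; rw [h, map_zero] at hfc; exact hne hfc
  refine IsUnit.of_mul_eq_one (C c⁻¹) ?_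
  rw [hfc, ← map_mul, mul_inv_cancel₀ hc, map_one]

end AuxLemmas

/-- Let `C : f = 0` be a nodal curve of degree `N` in `ℙ^2` with two
irreducible components, `f = f₁ f₂`.  The 2-form `γ = -df₁ ∧ df₂` satisfies `df ∧ γ = 0`
(i.e. its coefficient vector is a syzygy, homogeneous of degree `N - 2`) and represents a
nonzero class in `H^2(K^*(f))_N` (it is not a trivial Koszul relation). -/
theorem statement6 (N d₁ d₂ : ℕ) (f f₁ f₂ : MvPolynomial (Fin 3) ℂ)
    (hfact : f = f₁ * f₂) (h1 : f₁.IsHomogeneous d₁) (h2 : f₂.IsHomogeneous d₂)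
    (hN : d₁ + d₂ = N) (hirr1 : Irreducible f₁) (hirr2 : Irreducible f₂)
    (hdist : ¬ Associated f₁ f₂) (hnod : IsNodal (n := 2) f) :
    (fun i => -(cross3 f₁ f₂ i)) ∈ syzygySubmodule (n := 2) f (N - 2) ∧
    (fun i => -(cross3 f₁ f₂ i)) ∉ trivialSyzygies (n := 2) f N (N - 2) := by
  have hne1 : f₁ ≠ 0 := hirr1.ne_zero
  have hne2 : f₂ ≠ 0 := hirr2.ne_zero
  have hd1 : 1 ≤ d₁ := by
    by_contra h
    have : d₁ = 0 := by omega
    exact hirr1.not_isUnit (aux_isUnit_of_hom_zero (this ▸ h1) hne1)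
  have hd2 : 1 ≤ d₂ := by
    by_contra h
    have : d₂ = 0 := by omega
    exact hirr2.not_isUnit (aux_isUnit_of_hom_zero (this ▸ h2) hne2)
  constructor
  · -- syzygy membership
    rw [syzygySubmodule, Submodule.mem_inf]
    constructor
    · rw [Submodule.mem_iInf]
      intro i
      rw [Submodule.mem_comap]
      have hdeg : N - 2 = (d₁ - 1) + (d₂ - 1) := by omega
      have hcomp : ∀ a b : Fin 3,
          ((pderiv a f₁ * pderiv b f₂).IsHomogeneous (N - 2)) := by
        intro a b
        rw [hdeg]
        exact (aux_pderiv_isHom h1 a).mul (aux_pderiv_isHom h2 b)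
      show (-(cross3 f₁ f₂ i)) ∈ homogeneousSubmodule (Fin 3) ℂ (N - 2)
      rw [mem_homogeneousSubmodule]
      fin_cases i <;>
        · simp only [cross3, Matrix.cons_val_zero, Matrix.cons_val_one, Matrix.head_cons,
            Matrix.cons_val_two, Matrix.tail_cons, Fin.isValue]
          exact ((hcomp _ _).sub (hcomp _ _)).neg
    · rw [LinearMap.mem_ker]
      show jacobianPairing f (fun i => -(cross3 f₁ f₂ i)) = 0
      simp only [jacobianPairing, LinearMap.sum_apply, LinearMap.comp_apply,
        LinearMap.proj_apply, LinearMap.mulRight_apply, Fin.sum_univ_three,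
        Fin.sum_univ_succ, Fin.sum_univ_zero, LinearMap.add_apply, LinearMap.zero_apply,
        Fin.succ_zero_eq_one, Fin.succ_one_eq_two,
        cross3, Matrix.cons_val_zero, Matrix.cons_val_one, Matrix.head_cons,
        Matrix.cons_val_two, Matrix.tail_cons, hfact, pderiv_mul, Fin.isValue]
      ring
  · -- nontriviality
    have hset : {a : Fin 3 → MvPolynomial (Fin 3) ℂ | ∃ i j : Fin 3, ∃ d : ℕ,
        ∃ h : MvPolynomial (Fin 3) ℂ,
        N - 2 = d + (N - 1) ∧ h ∈ homogeneousSubmodule (Fin 3) ℂ d ∧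
        a = elementarySyzygy (n := 2) f i j h} = ∅ := by
      ext a
      simp only [Set.mem_setOf_eq, Set.mem_empty_iff_false, iff_false]
      rintro ⟨i, j, d, h, hd, -, -⟩
      omega
    rw [trivialSyzygies, hset, Submodule.span_empty, Submodule.mem_bot]
    intro h0
    have m0 : pderiv 1 f₁ * pderiv 2 f₂ - pderiv 2 f₁ * pderiv 1 f₂ = 0 := by
      have := congrFun h0 0
      simp only [cross3, Matrix.cons_val_zero, Pi.zero_apply, neg_eq_zero] at this
      exact this
    have m1 : pderiv 2 f₁ * pderiv 0 f₂ - pderiv 0 f₁ * pderiv 2 f₂ = 0 := by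
      have := congrFun h0 1
      simp only [cross3, Matrix.cons_val_one, Matrix.head_cons, Pi.zero_apply,
        neg_eq_zero] at this
      exact this
    have m2 : pderiv 0 f₁ * pderiv 1 f₂ - pderiv 1 f₁ * pderiv 0 f₂ = 0 := by
      have := congrFun h0 2
      simp only [cross3, Matrix.cons_val_two, Matrix.tail_cons, Matrix.head_cons,
        Pi.zero_apply, neg_eq_zero] at this
      exact this
    have E1 := aux_euler h1
    have E2 := aux_euler h2
    rw [Fin.sum_univ_three, nsmul_eq_mul] at E1 E2
    -- key identity: d₁ f₁ ∂ⱼf₂ = d₂ f₂ ∂ⱼf₁ for all j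
    have key : ∀ j : Fin 3,
        (d₁ : MvPolynomial (Fin 3) ℂ) * f₁ * pderiv j f₂
          = (d₂ : MvPolynomial (Fin 3) ℂ) * f₂ * pderiv j f₁ := by
      have key0 : (d₁ : MvPolynomial (Fin 3) ℂ) * f₁ * pderiv 0 f₂
          = (d₂ : MvPolynomial (Fin 3) ℂ) * f₂ * pderiv 0 f₁ := by
        linear_combination -(pderiv 0 f₂) * E1 + (pderiv 0 f₁) * E2
          - X 1 * m2 + X 2 * m1
      have key1 : (d₁ : MvPolynomial (Fin 3) ℂ) * f₁ * pderiv 1 f₂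
          = (d₂ : MvPolynomial (Fin 3) ℂ) * f₂ * pderiv 1 f₁ := by
        linear_combination -(pderiv 1 f₂) * E1 + (pderiv 1 f₁) * E2
          + X 0 * m2 - X 2 * m0
      have key2 : (d₁ : MvPolynomial (Fin 3) ℂ) * f₁ * pderiv 2 f₂
          = (d₂ : MvPolynomial (Fin 3) ℂ) * f₂ * pderiv 2 f₁ := by
        linear_combination -(pderiv 2 f₂) * E1 + (pderiv 2 f₁) * E2
          - X 0 * m1 + X 1 * m0
      intro j
      fin_cases j
      · exact key0
      · exact key1
      · exact key2
    have hcast1 : (d₁ : MvPolynomial (Fin 3) ℂ) ≠ 0 := by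
      rw [Nat.cast_ne_zero]; omega
    have hcast2 : (d₂ : MvPolynomial (Fin 3) ℂ) ≠ 0 := by
      rw [Nat.cast_ne_zero]; omega
    have hprime1 : Prime f₁ := hirr1.prime
    -- either f₁ ∣ f₂ (contradiction with hdist) or f₁ ∣ ∂ⱼf₁ for all j
    have hunit2 : IsUnit ((d₂ : MvPolynomial (Fin 3) ℂ)) := by
      refine IsUnit.of_mul_eq_one (C ((d₂ : ℂ))⁻¹) ?_
      rw [← map_natCast (C : ℂ →+* MvPolynomial (Fin 3) ℂ) d₂, ← map_mul,
        mul_inv_cancel₀ (by exact_mod_cast (by omega : d₂ ≠ 0) : (d₂ : ℂ) ≠ 0), map_one]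
    by_cases hdvd : f₁ ∣ f₂
    · obtain ⟨u, hu⟩ := hdvd
      rcases hirr2.isUnit_or_isUnit hu with hu1 | hu2
      · exact hirr1.not_isUnit hu1
      · exact hdist ⟨hu2.unit, by rw [IsUnit.unit_spec, ← hu]⟩
    · have hdall : ∀ j : Fin 3, f₁ ∣ pderiv j f₁ := by
        intro j
        have hdvd' : f₁ ∣ (d₂ : MvPolynomial (Fin 3) ℂ) * (f₂ * pderiv j f₁) :=
          ⟨(d₁ : MvPolynomial (Fin 3) ℂ) * pderiv j f₂, by linear_combination -key j⟩
        rcases hprime1.dvd_or_dvd hdvd' with h' | h'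
        · exact absurd (isUnit_of_dvd_unit h' hunit2) hirr1.not_isUnit
        · rcases hprime1.dvd_or_dvd h' with h'' | h''
          · exact absurd h'' hdvd
          · exact h''
      obtain ⟨q0, hq0⟩ := hdall 0
      obtain ⟨q1, hq1⟩ := hdall 1
      obtain ⟨q2, hq2⟩ := hdall 2
      have heq : f₁ * (d₁ : MvPolynomial (Fin 3) ℂ)
          = f₁ * (X 0 * q0 + X 1 * q1 + X 2 * q2) := by
        linear_combination -E1 + X 0 * hq0 + X 1 * hq1 + X 2 * hq2
      have hcc := mul_left_cancel₀ hne1 heq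
      have := congrArg constantCoeff hcc
      simp only [map_natCast, map_add, map_mul, constantCoeff_X, zero_mul, add_zero,
        zero_add] at this
      have : (d₁ : ℂ) = 0 := by simpa using this
      rw [Nat.cast_eq_zero] at this
      omega


end
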